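/- For every τ ≥ 0, the double integral ∫₀^∞∫₀^∞ y (y′)² exp(−(y² + y′²)/4 − (y y′/2) cosh τ) dy dy′ converges and equals √π / cosh⁴(τ/2). -/

import Mathlib

open MeasureTheory Real Set Filter

set_option maxHeartbeats 1000000

lemma zaremba_deriv_piece {c : ℝ} (hc : 1 ≤ c) {t : ℝ} (ht : 0 ≤ t) :
    HasDerivAt (fun u : ℝ => Real.sqrt (u^2 + 2*c*u + 1))
      ((t + c) / Real.sqrt (t^2 + 2*c*t + 1)) t := by
  have hq : (0:ℝ) < t^2 + 2*c*t + 1 := by nlinarith [sq_nonneg t]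
  have hq' : HasDerivAt (fun u : ℝ => u^2 + 2*c*u + 1) (2*t + 2*c) t := by
    have h := ((hasDerivAt_pow 2 t).add (((hasDerivAt_id t).const_mul (2*c)))).add_const 1
    refine h.congr_deriv ?_
    ring
  have h := hq'.sqrt hq.ne'
  refine h.congr_deriv ?_
  have hs : Real.sqrt (t^2 + 2*c*t + 1) ≠ 0 := (Real.sqrt_pos.2 hq).ne'
  field_simp

lemma zaremba_deriv_F {c : ℝ} (hc : 1 < c) {t : ℝ} (ht : 0 ≤ t) :
    HasDerivAt (fun u : ℝ =>
        (-1/3) * (Real.sqrt (u^2 + 2*c*u + 1) ^ 3)⁻¹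
        + (c/(3*(c^2-1))) * ((u+c) * (Real.sqrt (u^2 + 2*c*u + 1) ^ 3)⁻¹)
        - (2*c/(3*(c^2-1)^2)) * ((u+c) * (Real.sqrt (u^2 + 2*c*u + 1))⁻¹))
      (t / Real.sqrt (t^2 + 2*c*t + 1) ^ 5) t := by
  have hq : (0:ℝ) < t^2 + 2*c*t + 1 := by nlinarith [sq_nonneg t]
  set r := Real.sqrt (t^2 + 2*c*t + 1) with hrdef
  have hrpos : 0 < r := Real.sqrt_pos.2 hq
  have hr2 : r ^ 2 = t^2 + 2*c*t + 1 := Real.sq_sqrt hq.le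
  have hrne : r ≠ 0 := hrpos.ne'
  have hs2 : c^2 - 1 ≠ 0 := by nlinarith
  have hr : HasDerivAt (fun u : ℝ => Real.sqrt (u^2 + 2*c*u + 1)) ((t + c) / r) t :=
    zaremba_deriv_piece hc.le ht
  have h3 : HasDerivAt (fun u : ℝ => Real.sqrt (u^2 + 2*c*u + 1) ^ 3)
      (3 * r^2 * ((t+c)/r)) t := by
    have := hr.pow 3
    refine this.congr_deriv ?_; push_cast; ring
  have h3inv := h3.inv (by positivity)
  have hid : HasDerivAt (fun u : ℝ => u + c) 1 t := (hasDerivAt_id t).add_const c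
  have hterm1 : HasDerivAt (fun u : ℝ => (-1/3) * (Real.sqrt (u^2 + 2*c*u + 1) ^ 3)⁻¹)
      ((t+c) / r ^ 5) t := by
    have h := h3inv.const_mul (-1/3 : ℝ)
    rw [← hrdef] at h
    refine h.congr_deriv ?_
    field_simp
  have hterm2 : HasDerivAt
      (fun u : ℝ => (c/(3*(c^2-1))) * ((u+c) * (Real.sqrt (u^2 + 2*c*u + 1) ^ 3)⁻¹))
      ((c/(3*(c^2-1))) * ((r^2 - 3*(t+c)^2) / r^5)) t := by
    have h := (hid.mul h3inv).const_mul (c/(3*(c^2-1)))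
    rw [← hrdef] at h
    refine h.congr_deriv ?_
    simp only [Pi.inv_apply, Pi.pow_apply, ← hrdef]
    field_simp
    ring
  have hterm3 : HasDerivAt
      (fun u : ℝ => (2*c/(3*(c^2-1)^2)) * ((u+c) * (Real.sqrt (u^2 + 2*c*u + 1))⁻¹))
      ((2*c/(3*(c^2-1)^2)) * ((r^2 - (t+c)^2) * r^2 / r^5)) t := by
    have hrinv := hr.inv hrpos.ne'
    have h := (hid.mul hrinv).const_mul (2*c/(3*(c^2-1)^2))
    rw [← hrdef] at h
    refine h.congr_deriv ?_
    simp only [Pi.inv_apply, Pi.pow_apply, ← hrdef]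
    field_simp
    ring
  have htotal := (hterm1.add hterm2).sub hterm3
  refine htotal.congr_deriv ?_
  have hr5 : r^5 = r * (t^2 + 2*c*t + 1)^2 := by
    rw [show r^5 = r * (r^2)^2 by ring, hr2]
  rw [hr5, hr2]
  field_simp
  ring

lemma zaremba_K_gt {c : ℝ} (hc : 1 < c) :
    IntegrableOn (fun t : ℝ => t / Real.sqrt (t^2 + 2*c*t + 1) ^ 5) (Set.Ioi 0) ∧
    ∫ t in Set.Ioi (0:ℝ), t / Real.sqrt (t^2 + 2*c*t + 1) ^ 5 = 1 / (3 * (1+c)^2) := by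
  set s2 := c^2 - 1 with hs2def
  have hs2 : 0 < s2 := by nlinarith
  set F : ℝ → ℝ := fun u =>
      (-1/3) * (Real.sqrt (u^2 + 2*c*u + 1) ^ 3)⁻¹
      + (c/(3*s2)) * ((u+c) * (Real.sqrt (u^2 + 2*c*u + 1) ^ 3)⁻¹)
      - (2*c/(3*s2^2)) * ((u+c) * (Real.sqrt (u^2 + 2*c*u + 1))⁻¹) with hFdef
  have hderiv : ∀ t ∈ Set.Ici (0:ℝ),
      HasDerivAt F (t / Real.sqrt (t^2 + 2*c*t + 1) ^ 5) t := fun t ht => zaremba_deriv_F hc ht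
  have hcont : ContinuousWithinAt F (Set.Ici 0) 0 :=
    (hderiv 0 (Set.mem_Ici.2 le_rfl)).continuousAt.continuousWithinAt
  have hpos : ∀ t ∈ Set.Ioi (0:ℝ), 0 ≤ t / Real.sqrt (t^2 + 2*c*t + 1) ^ 5 := by
    intro t ht
    have ht' : 0 < t := ht
    have := Real.sqrt_nonneg (t^2 + 2*c*t + 1)
    positivity
  -- tendsto of sqrt part to atTop
  have hqln : ∀ t : ℝ, 0 ≤ t → t ≤ Real.sqrt (t^2 + 2*c*t + 1) := by
    intro t ht
    calc t = Real.sqrt (t^2) := by rw [Real.sqrt_sq ht]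
    _ ≤ Real.sqrt (t^2 + 2*c*t + 1) := Real.sqrt_le_sqrt (by nlinarith)
  have hrtop : Tendsto (fun t : ℝ => Real.sqrt (t^2 + 2*c*t + 1)) atTop atTop := by
    apply tendsto_atTop_mono' atTop ?_ tendsto_id
    filter_upwards [eventually_ge_atTop (0:ℝ)] with t ht
    exact hqln t ht
  have hinv1 : Tendsto (fun t : ℝ => (Real.sqrt (t^2 + 2*c*t + 1) ^ 3)⁻¹) atTop (nhds 0) :=
    ((tendsto_pow_atTop (by norm_num : 3 ≠ 0)).comp hrtop).inv_tendsto_atTop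
  have hinv2 : Tendsto (fun t : ℝ => (Real.sqrt (t^2 + 2*c*t + 1) ^ 2)⁻¹) atTop (nhds 0) :=
    ((tendsto_pow_atTop (by norm_num : 2 ≠ 0)).comp hrtop).inv_tendsto_atTop
  have hratio : Tendsto (fun t : ℝ => (t+c) * (Real.sqrt (t^2 + 2*c*t + 1))⁻¹) atTop (nhds 1) := by
    have h1 : Tendsto (fun t : ℝ => Real.sqrt (1 + s2 * (Real.sqrt (t^2 + 2*c*t + 1) ^ 2)⁻¹))
        atTop (nhds 1) := by
      have h2 : Tendsto (fun t : ℝ => 1 + s2 * (Real.sqrt (t^2 + 2*c*t + 1) ^ 2)⁻¹)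
          atTop (nhds 1) := by
        have := (hinv2.const_mul s2)
        have h3 := this.const_add (1:ℝ)
        simpa using h3
      have := (Real.continuous_sqrt.tendsto 1).comp h2
      rw [Real.sqrt_one] at this
      exact this
    apply h1.congr'
    filter_upwards [eventually_ge_atTop (0:ℝ)] with t ht
    have hq : (0:ℝ) < t^2 + 2*c*t + 1 := by nlinarith [sq_nonneg t]
    have hr2 : Real.sqrt (t^2 + 2*c*t + 1) ^ 2 = t^2 + 2*c*t + 1 := Real.sq_sqrt hq.le
    have htc : (0:ℝ) ≤ t + c := by nlinarith
    rw [hr2]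
    rw [show 1 + s2 * (t^2 + 2*c*t + 1)⁻¹ = (t+c)^2 * (t^2 + 2*c*t + 1)⁻¹ by
      rw [hs2def]; field_simp; ring]
    rw [Real.sqrt_mul (sq_nonneg _), Real.sqrt_sq htc, Real.sqrt_inv]
  have hterm2top : Tendsto (fun t : ℝ => (t+c) * (Real.sqrt (t^2 + 2*c*t + 1) ^ 3)⁻¹)
      atTop (nhds 0) := by
    have h := hratio.mul hinv2
    rw [mul_zero (1:ℝ)] at h
    apply h.congr
    intro t
    rw [show Real.sqrt (t^2+2*c*t+1) ^ 3 = Real.sqrt (t^2+2*c*t+1) * Real.sqrt (t^2+2*c*t+1)^2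
      by ring, mul_inv]
    ring
  have hlim : Tendsto F atTop (nhds (-(2*c/(3*s2^2)))) := by
    have h1 := hinv1.const_mul (-1/3 : ℝ)
    have h2 := hterm2top.const_mul (c/(3*s2))
    have h3 := hratio.const_mul (2*c/(3*s2^2))
    have := (h1.add h2).sub h3
    simpa using this
  have hint : IntegrableOn (fun t : ℝ => t / Real.sqrt (t^2 + 2*c*t + 1) ^ 5) (Set.Ioi 0) :=
    integrableOn_Ioi_deriv_of_nonneg hcont (fun t ht => hderiv t (Set.mem_Ici.2 (le_of_lt ht))) hpos hlim
  refine ⟨hint, ?_⟩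
  rw [integral_Ioi_of_hasDerivAt_of_tendsto hcont (fun t ht => hderiv t (Set.mem_Ici.2 (le_of_lt ht))) hint hlim]
  have hF0 : F 0 = -1/3 + (c/(3*s2)) * c - (2*c/(3*s2^2)) * c := by
    simp [hFdef]
  rw [hF0, hs2def]
  have h1 : c - 1 ≠ 0 := by nlinarith
  have h2 : c + 1 ≠ 0 := by nlinarith
  have h3 : c^2 - 1 ≠ 0 := by nlinarith
  field_simp
  ring

lemma zaremba_K_one :
    IntegrableOn (fun t : ℝ => t / (t+1)^5) (Set.Ioi 0) ∧
    ∫ t in Set.Ioi (0:ℝ), t / (t+1)^5 = 1/12 := by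
  set F : ℝ → ℝ := fun u => (-1/3) * ((u+1)^3)⁻¹ + (1/4) * ((u+1)^4)⁻¹ with hFdef
  have hderiv : ∀ t ∈ Set.Ici (0:ℝ), HasDerivAt F (t / (t+1)^5) t := by
    intro t ht
    have ht0 : (0:ℝ) ≤ t := ht
    have hne : t + 1 ≠ 0 := by positivity
    have h1 : HasDerivAt (fun u : ℝ => u + 1) 1 t := (hasDerivAt_id t).add_const 1
    have h3 := ((h1.pow 3).inv (pow_ne_zero 3 hne)).const_mul (-1/3 : ℝ)
    have h4 := ((h1.pow 4).inv (pow_ne_zero 4 hne)).const_mul (1/4 : ℝ)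
    have := h3.add h4
    refine this.congr_deriv ?_
    simp only [Pi.inv_apply, Pi.pow_apply]
    push_cast
    field_simp
    ring
  have hcont : ContinuousWithinAt F (Set.Ici 0) 0 :=
    (hderiv 0 (Set.mem_Ici.2 le_rfl)).continuousAt.continuousWithinAt
  have hpos : ∀ t ∈ Set.Ioi (0:ℝ), 0 ≤ t / (t+1)^5 := by
    intro t ht
    have ht' : 0 < t := ht
    positivity
  have htop : Tendsto (fun t : ℝ => t + 1) atTop atTop := tendsto_atTop_add_const_right _ 1 tendsto_id
  have hlim : Tendsto F atTop (nhds 0) := by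
    have h3 := (((tendsto_pow_atTop (by norm_num : 3 ≠ 0)).comp htop).inv_tendsto_atTop).const_mul
      (-1/3 : ℝ)
    have h4 := (((tendsto_pow_atTop (by norm_num : 4 ≠ 0)).comp htop).inv_tendsto_atTop).const_mul
      (1/4 : ℝ)
    have := h3.add h4
    rw [hFdef]
    simpa using this
  have hint : IntegrableOn (fun t : ℝ => t / (t+1)^5) (Set.Ioi 0) :=
    integrableOn_Ioi_deriv_of_nonneg hcont (fun t ht => hderiv t (Set.mem_Ici.2 (le_of_lt ht))) hpos hlim
  refine ⟨hint, ?_⟩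
  rw [integral_Ioi_of_hasDerivAt_of_tendsto hcont (fun t ht => hderiv t (Set.mem_Ici.2 (le_of_lt ht))) hint hlim]
  have hF0 : F 0 = -1/3 + 1/4 := by norm_num [hFdef]
  rw [hF0]
  norm_num

lemma zaremba_aux_rpow {x : ℝ} (hx : 0 < x) :
    x ^ (-(5:ℝ)/2) = (Real.sqrt x ^ 5)⁻¹ := by
  rw [Real.sqrt_eq_rpow, ← Real.rpow_natCast (x ^ ((1:ℝ)/2)) 5, ← Real.rpow_mul hx.le,
    ← Real.rpow_neg hx.le]
  norm_num

lemma zaremba_aux_K {c : ℝ} (hc : 1 ≤ c) :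
    IntegrableOn (fun t : ℝ => t * (t^2 + 2*c*t + 1) ^ (-(5:ℝ)/2)) (Set.Ioi 0) ∧
    ∫ t in Set.Ioi (0:ℝ), t * (t^2 + 2*c*t + 1) ^ (-(5:ℝ)/2) = 1 / (3 * (1+c)^2) := by
  rcases hc.eq_or_lt with rfl|hgt
  · have heq : Set.EqOn (fun t : ℝ => t * (t^2 + 2*1*t + 1) ^ (-(5:ℝ)/2))
        (fun t : ℝ => t / (t+1)^5) (Set.Ioi 0) := by
      intro t ht
      have ht' : (0:ℝ) < t := ht
      have hq : (0:ℝ) < t^2 + 2*1*t + 1 := by nlinarith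
      simp only
      rw [zaremba_aux_rpow hq, show t^2+2*1*t+1 = (t+1)^2 by ring,
        Real.sqrt_sq (by linarith : (0:ℝ) ≤ t+1), div_eq_mul_inv]
    obtain ⟨h1, h2⟩ := zaremba_K_one
    refine ⟨(h1.congr_fun ?_ measurableSet_Ioi : _), ?_⟩
    · exact fun t ht => (heq ht).symm
    · rw [setIntegral_congr_fun measurableSet_Ioi heq, h2]
      norm_num
  · have heq : Set.EqOn (fun t : ℝ => t * (t^2 + 2*c*t + 1) ^ (-(5:ℝ)/2))
        (fun t : ℝ => t / Real.sqrt (t^2 + 2*c*t + 1) ^ 5) (Set.Ioi 0) := by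
      intro t ht
      have ht' : (0:ℝ) < t := ht
      have hq : (0:ℝ) < t^2 + 2*c*t + 1 := by nlinarith
      simp only
      rw [zaremba_aux_rpow hq, div_eq_mul_inv]
    obtain ⟨h1, h2⟩ := zaremba_K_gt hgt
    refine ⟨(h1.congr_fun ?_ measurableSet_Ioi : _), ?_⟩
    · exact fun t ht => (heq ht).symm
    · rw [setIntegral_congr_fun measurableSet_Ioi heq, h2]

lemma zaremba_aux_gauss4 {b : ℝ} (hb : 0 < b) :
    ∫ y in Set.Ioi (0:ℝ), y ^ 4 * Real.exp (-b * y ^ 2)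
      = 3 / 8 * Real.sqrt π * b ^ (-(5:ℝ)/2) := by
  have h := integral_rpow_mul_exp_neg_mul_rpow (p := 2) (q := 4) two_pos (by norm_num) hb
  have hcongr : ∫ y in Set.Ioi (0:ℝ), y ^ 4 * Real.exp (-b * y ^ 2)
      = ∫ x in Set.Ioi (0:ℝ), x ^ (4:ℝ) * Real.exp (-b * x ^ (2:ℝ)) := by
    refine setIntegral_congr_fun measurableSet_Ioi (fun x hx => ?_)
    rw [show (4:ℝ) = ((4:ℕ):ℝ) by norm_num, Real.rpow_natCast,
      show (2:ℝ) = ((2:ℕ):ℝ) by norm_num, Real.rpow_natCast]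
  have hG : Real.Gamma ((4 + 1) / 2) = 3 / 4 * Real.sqrt π := by
    have h1 : ((4:ℝ) + 1) / 2 = 3/2 + 1 := by norm_num
    have h2 := Real.Gamma_add_one (by norm_num : (3/2:ℝ) ≠ 0)
    have h3 : (3/2 : ℝ) = 1/2 + 1 := by norm_num
    have h4 := Real.Gamma_add_one (by norm_num : (1/2:ℝ) ≠ 0)
    rw [h1, h2, h3, h4, Real.Gamma_one_half_eq]
    ring
  rw [hcongr, h, hG]
  rw [show -((4:ℝ)+1)/2 = -(5:ℝ)/2 by norm_num]
  ring

/-- For every `τ ≥ 0`, the double integral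
`∫₀^∞∫₀^∞ y (y′)² exp(−(y² + y′²)/4 − (y y′/2) cosh τ) dy dy′` converges and equals
`√π / cosh⁴(τ/2)`. -/
theorem zaremba_double_integral_yy2 (τ : ℝ) (hτ : 0 ≤ τ) :
    IntegrableOn
      (fun p : ℝ × ℝ =>
        p.1 * p.2 ^ 2 * Real.exp (-(p.1 ^ 2 + p.2 ^ 2) / 4 - p.1 * p.2 / 2 * Real.cosh τ))
      (Set.Ioi 0 ×ˢ Set.Ioi 0) ∧
    ∫ p in Set.Ioi (0 : ℝ) ×ˢ Set.Ioi (0 : ℝ),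
        p.1 * p.2 ^ 2 * Real.exp (-(p.1 ^ 2 + p.2 ^ 2) / 4 - p.1 * p.2 / 2 * Real.cosh τ)
      = Real.sqrt π / (Real.cosh (τ / 2)) ^ 4 := by
  set c := Real.cosh τ with hcdef
  have hc : 1 ≤ c := Real.one_le_cosh τ
  set μ : Measure ℝ := volume.restrict (Set.Ioi 0) with hμdef
  set f : ℝ × ℝ → ℝ := fun p =>
    p.1 * p.2 ^ 2 * Real.exp (-(p.1 ^ 2 + p.2 ^ 2) / 4 - p.1 * p.2 / 2 * c) with hfdef
  set g : ℝ × ℝ → ℝ := fun q =>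
    q.1 * (q.2 ^ 4 * Real.exp (-((q.1^2 + 2*c*q.1 + 1)/4) * q.2 ^ 2)) with hgdef
  obtain ⟨hKint, hKval⟩ := zaremba_aux_K hc
  have hrestrict : μ.prod μ = (volume : Measure (ℝ×ℝ)).restrict (Set.Ioi 0 ×ˢ Set.Ioi 0) := by
    rw [hμdef, Measure.prod_restrict, ← Measure.volume_eq_prod]
  have hfcont : Continuous f := by fun_prop
  have hgcont : Continuous g := by fun_prop
  have hgmeas : AEStronglyMeasurable g (μ.prod μ) := hgcont.aestronglyMeasurable
  have hfmeas : AEStronglyMeasurable f (μ.prod μ) := hfcont.aestronglyMeasurable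
  have hqpos : ∀ t : ℝ, 0 < t → 0 < (t^2 + 2*c*t + 1)/4 := fun t ht => by nlinarith
  -- slice results for g
  have hgslice_int : ∀ t : ℝ, 0 < t → Integrable (fun y => g (t, y)) μ := by
    intro t ht
    have hb : 0 < (t^2+2*c*t+1)/4 := hqpos t ht
    have h := integrableOn_rpow_mul_exp_neg_mul_sq hb (by norm_num : (-1:ℝ) < 4)
    have h2 : IntegrableOn (fun y : ℝ => y^4 * Real.exp (-((t^2+2*c*t+1)/4) * y^2))
        (Set.Ioi 0) := by
      refine h.congr_fun (fun y hy => ?_) measurableSet_Ioi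
      beta_reduce
      rw [show ((4:ℝ)) = ((4:ℕ):ℝ) by norm_num, Real.rpow_natCast]
    exact h2.const_mul t
  have h4pow : (4:ℝ) ^ (-(5:ℝ)/2) = 1/32 := by
    rw [show (4:ℝ) = 2^(2:ℕ) by norm_num, ← Real.rpow_natCast 2 2,
      ← Real.rpow_mul (by norm_num : (0:ℝ) ≤ 2),
      show ((2:ℕ):ℝ) * (-(5:ℝ)/2) = ((-5 : ℤ) : ℝ) by norm_num, Real.rpow_intCast]
    norm_num
  have hgslice_val : ∀ t : ℝ, 0 < t →
      ∫ y, g (t, y) ∂μ = 12 * Real.sqrt π * (t * (t^2+2*c*t+1) ^ (-(5:ℝ)/2)) := by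
    intro t ht
    have hb : 0 < (t^2+2*c*t+1)/4 := hqpos t ht
    have hq0 : (0:ℝ) ≤ t^2+2*c*t+1 := by nlinarith
    calc ∫ y, g (t, y) ∂μ
        = t * ∫ y in Set.Ioi (0:ℝ), y^4 * Real.exp (-((t^2+2*c*t+1)/4) * y^2) := by
          rw [hμdef]; simp only [hgdef]; rw [integral_const_mul]
      _ = t * (3/8 * Real.sqrt π * ((t^2+2*c*t+1)/4) ^ (-(5:ℝ)/2)) := by
          rw [zaremba_aux_gauss4 hb]
      _ = 12 * Real.sqrt π * (t * (t^2+2*c*t+1) ^ (-(5:ℝ)/2)) := by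
          rw [Real.div_rpow hq0 (by norm_num : (0:ℝ) ≤ 4), h4pow]
          ring
  have hg_int : Integrable g (μ.prod μ) := by
    refine (integrable_prod_iff hgmeas).2 ⟨?_, ?_⟩
    · filter_upwards [ae_restrict_mem measurableSet_Ioi] with t ht using hgslice_int t ht
    · refine Integrable.congr (hKint.const_mul (12 * Real.sqrt π)) ?_
      filter_upwards [ae_restrict_mem measurableSet_Ioi] with t ht
      have hnn : (fun y => ‖g (t, y)‖) = fun y => g (t, y) := by
        funext y
        refine Real.norm_of_nonneg ?_
        have ht' : (0:ℝ) ≤ t := le_of_lt ht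
        simp only [hgdef]
        positivity
      rw [show (∫ y, ‖g (t, y)‖ ∂μ) = ∫ y, g (t, y) ∂μ by rw [hnn], hgslice_val t ht]
  have hg_val : ∫ z, g z ∂(μ.prod μ) = 4 * Real.sqrt π / (1+c)^2 := by
    rw [MeasureTheory.integral_prod _ hg_int]
    have hstep : ∫ t, (∫ y, g (t,y) ∂μ) ∂μ
        = ∫ t in Set.Ioi (0:ℝ), 12 * Real.sqrt π * (t * (t^2+2*c*t+1) ^ (-(5:ℝ)/2)) := by
      rw [hμdef]
      refine setIntegral_congr_fun measurableSet_Ioi (fun t ht => ?_)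
      rw [← hμdef]
      exact hgslice_val t ht
    rw [hstep, integral_const_mul, hKval]
    have h1c : (1+c) ≠ 0 := by nlinarith
    field_simp
    ring
  -- slice results for f
  have hfpos : ∀ y y' : ℝ, 0 ≤ y → 0 ≤ y' → 0 ≤ f (y, y') := by
    intro y y' hy hy'
    simp only [hfdef]
    positivity
  have hfslice_int : ∀ y' : ℝ, 0 < y' → Integrable (fun y => f (y, y')) μ := by
    intro y' hy'
    have hmaj : Integrable (fun y : ℝ => y'^2 * (y * Real.exp (-(4:ℝ)⁻¹ * y^2))) μ :=
      ((integrable_mul_exp_neg_mul_sq (by norm_num : (0:ℝ) < 4⁻¹)).integrableOn).const_mul _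
    apply hmaj.mono'
    · exact (hfcont.comp (continuous_id.prodMk continuous_const)).aestronglyMeasurable
    · filter_upwards [ae_restrict_mem measurableSet_Ioi] with y hy
      have hy0 : 0 < y := hy
      have hc0 : (0:ℝ) < c := by nlinarith
      rw [Real.norm_of_nonneg (hfpos y y' hy0.le hy'.le)]
      have hE : -(y^2 + y'^2)/4 - y*y'/2*c ≤ -(4:ℝ)⁻¹ * y^2 := by
        nlinarith [mul_pos hy0 hy', sq_nonneg y']
      calc f (y, y') ≤ y * y'^2 * Real.exp (-(4:ℝ)⁻¹*y^2) := by
            simp only [hfdef]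
            exact mul_le_mul_of_nonneg_left (Real.exp_le_exp.2 hE) (by positivity)
        _ = y'^2 * (y * Real.exp (-(4:ℝ)⁻¹*y^2)) := by ring
  have hfslice_val : ∀ y' : ℝ, 0 < y' → ∫ y, f (y, y') ∂μ = ∫ t, g (t, y') ∂μ := by
    intro y' hy'
    have h := integral_comp_mul_left_Ioi (fun y => f (y, y')) 0 hy'
    rw [mul_zero] at h
    have h2 : ∫ t in Set.Ioi (0:ℝ), f (y' * t, y')
        = ∫ t in Set.Ioi (0:ℝ), y'⁻¹ * g (t, y') := by
      refine setIntegral_congr_fun measurableSet_Ioi (fun t ht => ?_)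
      simp only [hfdef, hgdef]
      rw [show -((y'*t)^2 + y'^2)/4 - (y'*t)*y'/2*c = -((t^2+2*c*t+1)/4) * y'^2 by ring]
      field_simp
    rw [h2, integral_const_mul, smul_eq_mul] at h
    have := mul_left_cancel₀ (inv_ne_zero hy'.ne') h
    rw [hμdef]
    exact this.symm
  have hf_int : Integrable f (μ.prod μ) := by
    refine (integrable_prod_iff' hfmeas).2 ⟨?_, ?_⟩
    · filter_upwards [ae_restrict_mem measurableSet_Ioi] with y' hy' using hfslice_int y' hy'
    · refine Integrable.congr hg_int.integral_prod_right ?_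
      filter_upwards [ae_restrict_mem measurableSet_Ioi] with y' hy'
      rw [← hfslice_val y' hy', hμdef]
      refine setIntegral_congr_fun measurableSet_Ioi (fun y hy => ?_)
      exact (Real.norm_of_nonneg (hfpos y y' (le_of_lt hy) hy'.le)).symm
  have hf_val : ∫ z, f z ∂(μ.prod μ) = 4 * Real.sqrt π / (1+c)^2 := by
    rw [MeasureTheory.integral_prod_symm _ hf_int, ← hg_val,
      MeasureTheory.integral_prod_symm _ hg_int, hμdef]
    refine setIntegral_congr_fun measurableSet_Ioi (fun y' hy' => ?_)
    rw [← hμdef]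
    exact hfslice_val y' hy'
  -- assemble
  have hch : Real.cosh (τ/2)^2 = (c+1)/2 := by
    have h2 : c = Real.cosh (2*(τ/2)) := by rw [hcdef, show 2*(τ/2) = τ by ring]
    rw [Real.cosh_two_mul] at h2
    have h3 := Real.cosh_sq (τ/2)
    linarith
  have hfinal : 4 * Real.sqrt π / (1+c)^2 = Real.sqrt π / (Real.cosh (τ / 2)) ^ 4 := by
    rw [show Real.cosh (τ/2)^4 = (Real.cosh (τ/2)^2)^2 by ring, hch]
    have h1c : (1+c) ≠ 0 := by nlinarith
    field_simp
    ring
  constructor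
  · rw [IntegrableOn, ← hrestrict]
    exact hf_int
  · rw [← hfinal, ← hf_val, hrestrict]
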